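/- For the SRM defined by g_α(λ) = (1+(ln α)^{-1})/(λ-(ln α)^{-1}) for α ∈ (0,α₀), α₀ < e^{-1}, with r_α(λ)=(1+λ)/(1-λ ln α), the function ρ(α) = -(ln α)^{-1} is optimal qualification: s_ρ(λ)=λ/(1+λ) ∈ (0,∞) for every λ>0, and s_ρ(λ)|r_α(λ)|/ρ(α) = λ/(λ-(ln α)^{-1}) ≥ 1/2 for all λ ≥ -(ln α)^{-1}. Moreover, for every μ>0 and λ>0, |r_α(λ)|λ^μ/α^μ → +∞ as α→0⁺, so the method has no classical qualification. -/

import Mathlib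

open Filter Topology Set

/-- A spectral regularization method `{g_α}_{α ∈ (0,α₀)}`:
`|λ g_α(λ)| ≤ C` uniformly (H2) and `g_α(λ) → 1/λ` as `α → 0⁺` for each `λ > 0` (H3). -/
structure SRM where
  α₀ : ℝ
  hα₀ : 0 < α₀
  g : ℝ → ℝ → ℝ
  C : ℝ
  hC : 0 < C
  bound : ∀ α ∈ Ioo (0:ℝ) α₀, ∀ l : ℝ, 0 ≤ l → |l * g α l| ≤ C
  tendsto_inv : ∀ l : ℝ, 0 < l → Tendsto (fun α => g α l) (𝓝[>] 0) (𝓝 (1 / l))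

namespace SRM
/-- `r_α(λ) = 1 - λ g_α(λ)`. -/
def r (G : SRM) (α l : ℝ) : ℝ := 1 - l * G.g α l
end SRM

/-- The class `𝒪` of nondecreasing positive functions with `ρ(α) → 0` as `α → 0⁺`. -/
def memO (ρ : ℝ → ℝ) : Prop :=
  (∀ a, 0 < a → 0 < ρ a) ∧ MonotoneOn ρ (Ioi (0:ℝ)) ∧ Tendsto ρ (𝓝[>] 0) (𝓝 0)

/-- The class `𝒮` of continuous `s : [0,∞) → [0,∞)` with `s(0)=0`, `s(λ)>0` for `λ>0`. -/
def memS (s : ℝ → ℝ) : Prop :=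
  ContinuousOn s (Ici (0:ℝ)) ∧ s 0 = 0 ∧ (∀ l, 0 ≤ l → 0 ≤ s l) ∧ (∀ l, 0 < l → 0 < s l)

/-- `(s,ρ)` is a weak source-order pair: `s(λ)|r_α(λ)|/ρ(α) = O(1)` as `α → 0⁺`, each `λ>0`. -/
def weakPair (G : SRM) (s ρ : ℝ → ℝ) : Prop :=
  ∀ l, 0 < l → ∃ k : ℝ, ∀ᶠ α in 𝓝[>] (0:ℝ), s l * |G.r α l| / ρ α ≤ k

/-- `(s,ρ)` is a strong source-order pair: weak, and the `O(1)` is never `o(1)`. -/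
def strongPair (G : SRM) (s ρ : ℝ → ℝ) : Prop :=
  weakPair G s ρ ∧
    ∀ l, 0 < l → 0 < Filter.limsup (fun α => s l * |G.r α l| / ρ α) (𝓝[>] (0:ℝ))

/-- `(ρ,s)` is an order-source pair: `s(λ)|r_α(λ)|/ρ(α) ≥ γ` for all `λ ≥ h(α)`. -/
def orderSourcePair (G : SRM) (ρ s : ℝ → ℝ) : Prop :=
  ∃ γ > (0:ℝ), ∃ h : ℝ → ℝ, (∀ α ∈ Ioo (0:ℝ) G.α₀, 0 < h α) ∧
    Tendsto h (𝓝[>] 0) (𝓝 0) ∧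
    ∀ α ∈ Ioo (0:ℝ) G.α₀, ∀ l, h α ≤ l → γ ≤ s l * |G.r α l| / ρ α

/-- `ρ` is weak (generalized) qualification of `{g_α}`. -/
def weakQual (G : SRM) (ρ : ℝ → ℝ) : Prop := ∃ s, memS s ∧ weakPair G s ρ

/-- `ρ` is strong qualification of `{g_α}`. -/
def strongQual (G : SRM) (ρ : ℝ → ℝ) : Prop := ∃ s, memS s ∧ strongPair G s ρ

/-- `ρ` is optimal qualification of `{g_α}`. -/
def optQual (G : SRM) (ρ : ℝ → ℝ) : Prop :=
  ∃ s, memS s ∧ strongPair G s ρ ∧ orderSourcePair G ρ s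

/-- `s_ρ(λ) = liminf_{α→0⁺} ρ(α)/|r_α(λ)|`, valued in `[0,∞]`. -/
noncomputable def SRM.sLow (G : SRM) (ρ : ℝ → ℝ) (l : ℝ) : ENNReal :=
  Filter.liminf (fun α => ENNReal.ofReal (ρ α) / ENNReal.ofReal |G.r α l|) (𝓝[>] (0:ℝ))


section Example4Aux

open Real

private lemma log_lt (a : ℝ) (ha : 0 < a) (hb : a < Real.exp (-1)) : Real.log a < -1 := by
  have := Real.log_lt_log ha hb
  rwa [Real.log_exp] at this

private lemma denom_pos {α l : ℝ} (hlog : Real.log α < 0) (hl : 0 ≤ l) :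
    0 < 1 - l * Real.log α := by nlinarith

private lemma r_formula (G : SRM) {α₀ : ℝ} (hα₀ : α₀ ≤ G.α₀)
    (hα₀e : G.α₀ < Real.exp (-1))
    (hg : ∀ α ∈ Ioo (0:ℝ) G.α₀, ∀ l : ℝ, 0 ≤ l →
      G.g α l = (1 + (Real.log α)⁻¹) / (l - (Real.log α)⁻¹))
    {α l : ℝ} (hα : α ∈ Ioo (0:ℝ) G.α₀) (hl : 0 ≤ l) :
    G.r α l = (1 + l) / (1 - l * Real.log α) := by
  have hlog : Real.log α < -1 := log_lt α hα.1 (hα.2.trans hα₀e)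
  have hlog0 : Real.log α ≠ 0 := by linarith
  have ht0 : (Real.log α)⁻¹ < 0 := inv_neg''.mpr (by linarith)
  have hlt : l - (Real.log α)⁻¹ ≠ 0 := by linarith
  have hd : 1 - l * Real.log α ≠ 0 := ne_of_gt (denom_pos (by linarith) hl)
  have hd2 : l * Real.log α - 1 ≠ 0 := fun h => hd (by linarith)
  have hg2 : (1 + (Real.log α)⁻¹) / (l - (Real.log α)⁻¹)
      = (Real.log α + 1) / (l * Real.log α - 1) := by
    rw [div_eq_div_iff hlt hd2]
    field_simp
  rw [SRM.r, hg α hα l hl, hg2, eq_div_iff hd]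
  field_simp
  ring

private lemma absr_formula (G : SRM) (hα₀e : G.α₀ < Real.exp (-1))
    (hg : ∀ α ∈ Ioo (0:ℝ) G.α₀, ∀ l : ℝ, 0 ≤ l →
      G.g α l = (1 + (Real.log α)⁻¹) / (l - (Real.log α)⁻¹))
    {α l : ℝ} (hα : α ∈ Ioo (0:ℝ) G.α₀) (hl : 0 ≤ l) :
    |G.r α l| = (1 + l) / (1 - l * Real.log α) := by
  rw [r_formula G le_rfl hα₀e hg hα hl]
  have hlog : Real.log α < -1 := log_lt α hα.1 (hα.2.trans hα₀e)
  exact abs_of_pos (div_pos (by linarith) (denom_pos (by linarith) hl))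

/-- the key ratio: `s l * |r α l| / ρ α = l / (l - (log α)⁻¹)` -/
private lemma ratio_formula (G : SRM) (hα₀e : G.α₀ < Real.exp (-1))
    (hg : ∀ α ∈ Ioo (0:ℝ) G.α₀, ∀ l : ℝ, 0 ≤ l →
      G.g α l = (1 + (Real.log α)⁻¹) / (l - (Real.log α)⁻¹))
    {α l : ℝ} (hα : α ∈ Ioo (0:ℝ) G.α₀) (hl : 0 ≤ l) :
    (l / (1 + l)) * |G.r α l| / (-(Real.log α)⁻¹) = l / (l - (Real.log α)⁻¹) := by
  rw [absr_formula G hα₀e hg hα hl]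
  have hlog : Real.log α < -1 := log_lt α hα.1 (hα.2.trans hα₀e)
  have hlog0 : Real.log α ≠ 0 := by linarith
  have ht0 : (Real.log α)⁻¹ < 0 := inv_neg''.mpr (by linarith)
  have hlt : l - (Real.log α)⁻¹ ≠ 0 := by linarith
  have hd : 1 - l * Real.log α ≠ 0 := ne_of_gt (denom_pos (by linarith) hl)
  have h1l : (1:ℝ) + l ≠ 0 := by linarith
  field_simp
  rw [eq_div_iff (fun h => hd (by linarith))]
  ring

private lemma ratio_ge_half {α l : ℝ} (hlog : Real.log α < -1)
    (hl : -(Real.log α)⁻¹ ≤ l) : (1:ℝ)/2 ≤ l / (l - (Real.log α)⁻¹) := by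
  have ht0 : (Real.log α)⁻¹ < 0 := inv_neg''.mpr (by linarith)
  have hp : 0 < -(Real.log α)⁻¹ := by linarith
  have hl0 : 0 < l := lt_of_lt_of_le hp hl
  rw [div_le_div_iff₀ (by norm_num) (by linarith)]
  linarith

private lemma tendsto_p : Tendsto (fun α : ℝ => -(Real.log α)⁻¹) (𝓝[>] 0) (𝓝 0) := by
  have h1 : Tendsto (fun α : ℝ => (-Real.log α)⁻¹) (𝓝[>] 0) (𝓝 0) :=
    tendsto_inv_atTop_zero.comp
      (tendsto_neg_atBot_atTop.comp Real.tendsto_log_nhdsGT_zero)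
  simpa [inv_neg] using h1

end Example4Aux

/-- Example 4: for `g_α(λ)=(1+(ln α)⁻¹)/(λ-(ln α)⁻¹)` with `α₀ < e⁻¹`
(so `r_α(λ)=(1+λ)/(1-λ ln α)`), `ρ(α) = -(ln α)⁻¹` is optimal qualification with
`s_ρ(λ)=λ/(1+λ)`, the order-source inequality holds with `γ=1/2`, `h(α)=-(ln α)⁻¹`,
and `|r_α(λ)|λ^μ/α^μ → +∞` for every `μ>0`, `λ>0` (no classical qualification). -/
theorem example4_optimal (G : SRM) (hα₀ : G.α₀ < Real.exp (-1))
    (hg : ∀ α ∈ Ioo (0:ℝ) G.α₀, ∀ l : ℝ, 0 ≤ l →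
      G.g α l = (1 + (Real.log α)⁻¹) / (l - (Real.log α)⁻¹)) :
    (∀ l : ℝ, 0 < l →
      G.sLow (fun a => -(Real.log a)⁻¹) l = ENNReal.ofReal (l / (1 + l))) ∧
    (∀ α ∈ Ioo (0:ℝ) G.α₀, ∀ l : ℝ, -(Real.log α)⁻¹ ≤ l →
      (1:ℝ)/2 ≤ l / (l - (Real.log α)⁻¹)) ∧
    optQual G (fun a => -(Real.log a)⁻¹) ∧
    (∀ μ : ℝ, 0 < μ → ∀ l : ℝ, 0 < l →
      Tendsto (fun α => |G.r α l| * l ^ μ / α ^ μ) (𝓝[>] 0) atTop) := by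
  have hmem : ∀ᶠ α in 𝓝[>] (0:ℝ), α ∈ Ioo (0:ℝ) G.α₀ :=
    Ioo_mem_nhdsGT_of_mem ⟨le_rfl, G.hα₀⟩
  have hinv : Tendsto (fun α : ℝ => (Real.log α)⁻¹) (𝓝[>] 0) (𝓝 0) := by
    simpa using tendsto_p.neg
  refine ⟨?_, ?_, ?_, ?_⟩
  · -- sLow computation
    intro l hl
    have h1l : (0:ℝ) < 1 + l := by linarith
    have hev : ∀ᶠ α in 𝓝[>] (0:ℝ),
        ENNReal.ofReal (-(Real.log α)⁻¹) / ENNReal.ofReal |G.r α l|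
          = ENNReal.ofReal ((l - (Real.log α)⁻¹) / (1 + l)) := by
      filter_upwards [hmem] with α hα
      have hlog : Real.log α < -1 := log_lt α hα.1 (hα.2.trans hα₀)
      have hrpos : 0 < |G.r α l| := by
        rw [absr_formula G hα₀ hg hα hl.le]
        exact div_pos h1l (denom_pos (by linarith) hl.le)
      rw [← ENNReal.ofReal_div_of_pos hrpos]
      congr 1
      rw [absr_formula G hα₀ hg hα hl.le]
      have hlog0 : Real.log α ≠ 0 := by linarith
      have ht0 : (Real.log α)⁻¹ < 0 := inv_neg''.mpr (by linarith)
      have hd : 1 - l * Real.log α ≠ 0 :=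
        ne_of_gt (denom_pos (by linarith) hl.le)
      rw [div_div_eq_mul_div]
      congr 1
      field_simp
      ring
    have htd : Tendsto (fun α : ℝ =>
        ENNReal.ofReal ((l - (Real.log α)⁻¹) / (1 + l))) (𝓝[>] 0)
        (𝓝 (ENNReal.ofReal (l / (1 + l)))) := by
      apply (ENNReal.continuous_ofReal.tendsto _).comp
      have : Tendsto (fun α : ℝ => (l - (Real.log α)⁻¹) / (1 + l)) (𝓝[>] 0)
          (𝓝 ((l - 0) / (1 + l))) :=
        ((tendsto_const_nhds.sub hinv).div tendsto_const_nhds (ne_of_gt h1l))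
      simpa using this
    exact (htd.congr' (by filter_upwards [hev] with α h using h.symm)).liminf_eq
  · -- the 1/2 inequality
    intro α hα l hl
    exact ratio_ge_half (log_lt α hα.1 (hα.2.trans hα₀)) hl
  · -- optimal qualification
    refine ⟨fun l => l / (1 + l), ⟨?_, by norm_num, ?_, ?_⟩, ⟨?_, ?_⟩, ?_⟩
    · exact ContinuousOn.div continuousOn_id (by fun_prop)
        (fun x hx => ne_of_gt (by simp only [mem_Ici] at hx; linarith))
    · exact fun l hl => div_nonneg hl (by linarith)
    · exact fun l hl => div_pos hl (by linarith)
    · -- weak pair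
      intro l hl
      refine ⟨1, ?_⟩
      filter_upwards [hmem] with α hα
      rw [ratio_formula G hα₀ hg hα hl.le]
      have hlog : Real.log α < -1 := log_lt α hα.1 (hα.2.trans hα₀)
      have ht0 : (Real.log α)⁻¹ < 0 := inv_neg''.mpr (by linarith)
      exact div_le_one_of_le₀ (by linarith) (by linarith)
    · -- limsup positive
      intro l hl
      have hev : ∀ᶠ α in 𝓝[>] (0:ℝ),
          l / (1 + l) * |G.r α l| / (-(Real.log α)⁻¹) = l / (l - (Real.log α)⁻¹) := by
        filter_upwards [hmem] with α hα
        exact ratio_formula G hα₀ hg hα hl.le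
      have htd : Tendsto (fun α : ℝ => l / (l - (Real.log α)⁻¹)) (𝓝[>] 0)
          (𝓝 1) := by
        have : Tendsto (fun α : ℝ => l / (l - (Real.log α)⁻¹)) (𝓝[>] 0)
            (𝓝 (l / (l - 0))) :=
          tendsto_const_nhds.div (tendsto_const_nhds.sub hinv)
            (by simpa using ne_of_gt hl)
        simpa [div_self (ne_of_gt hl)] using this
      have := (htd.congr' (by filter_upwards [hev] with α h using h.symm)).limsup_eq
      rw [this]
      norm_num
    · -- order-source pair
      refine ⟨1/2, by norm_num, fun α => -(Real.log α)⁻¹, ?_, tendsto_p, ?_⟩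
      · intro α hα
        have hlog : Real.log α < -1 := log_lt α hα.1 (hα.2.trans hα₀)
        have := inv_neg''.mpr (by linarith : Real.log α < 0)
        linarith
      · intro α hα l hl
        have hlog : Real.log α < -1 := log_lt α hα.1 (hα.2.trans hα₀)
        have hp : (0:ℝ) < -(Real.log α)⁻¹ := by
          have := inv_neg''.mpr (by linarith : Real.log α < 0); linarith
        rw [ratio_formula G hα₀ hg hα (le_of_lt (lt_of_lt_of_le hp hl))]
        exact ratio_ge_half hlog hl
  · -- no classical qualification
    intro μ hμ l hl
    have hlm : (0:ℝ) < l ^ μ := Real.rpow_pos_of_pos hl μ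
    have hN : (0:ℝ) < (1 + l) * l ^ μ := mul_pos (by linarith) hlm
    have hev : ∀ᶠ α in 𝓝[>] (0:ℝ),
        ((1 + l) * l ^ μ) / ((1 - l * Real.log α) * α ^ μ)
          = |G.r α l| * l ^ μ / α ^ μ := by
      filter_upwards [hmem] with α hα
      rw [absr_formula G hα₀ hg hα hl.le, div_mul_eq_mul_div, div_div]
    have hd : Tendsto (fun α : ℝ => (1 - l * Real.log α) * α ^ μ) (𝓝[>] 0)
        (𝓝[>] 0) := by
      rw [tendsto_nhdsWithin_iff]
      constructor
      · have h1 : Tendsto (fun α : ℝ => α ^ μ) (𝓝[>] 0) (𝓝 0) := by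
          have := (Real.continuousAt_rpow_const 0 μ (Or.inr hμ.le)).tendsto
          rw [Real.zero_rpow (ne_of_gt hμ)] at this
          exact this.mono_left nhdsWithin_le_nhds
        have h2 : Tendsto (fun α : ℝ => Real.log α * α ^ μ) (𝓝[>] 0) (𝓝 0) :=
          tendsto_log_mul_rpow_nhdsGT_zero hμ
        have h3 := h1.sub (h2.const_mul l)
        have : (fun α : ℝ => (1 - l * Real.log α) * α ^ μ)
            = fun α : ℝ => α ^ μ - l * (Real.log α * α ^ μ) := by
          funext α; ring
        rw [this]
        simpa using h3
      · filter_upwards [hmem] with α hα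
        have hlog : Real.log α < -1 := log_lt α hα.1 (hα.2.trans hα₀)
        exact mul_pos (denom_pos (by linarith) hl.le)
          (Real.rpow_pos_of_pos hα.1 μ)
    have hdiv : Tendsto (fun α : ℝ =>
        ((1 + l) * l ^ μ) / ((1 - l * Real.log α) * α ^ μ)) (𝓝[>] 0) atTop := by
      simp only [div_eq_mul_inv]
      exact Tendsto.const_mul_atTop hN hd.inv_tendsto_nhdsGT_zero
    exact hdiv.congr' hev
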